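/- For all real numbers λ > 0, μ > 0 and ζ ≥ 0, one has ∫₀^∞ exp(−ζ/(2x)) · √(λ/(2π x³)) · exp(−λ(x − μ)²/(2μ² x)) dx = (√λ/√(ζ + λ)) · exp(−(√λ/μ)(√(ζ + λ) − √λ)). In particular (case ζ = 0) the inverse Gaussian density integrates to 1. -/

import Mathlib

open MeasureTheory Real

section Aux
open Set

-- integrability lemma
lemma integrableOn_aux {a b s : ℝ} (ha : 0 < a) (hb : 0 < b) (hs : -3 < s) :
    IntegrableOn (fun x : ℝ => x ^ s * Real.exp (-(a * x + b / x))) (Set.Ioi 0) := by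
  have hmeas : AEStronglyMeasurable (fun x : ℝ => x ^ s * Real.exp (-(a * x + b / x)))
      (volume.restrict (Set.Ioi 0)) := by
    apply Measurable.aestronglyMeasurable
    fun_prop
  have hint : IntegrableOn (fun x : ℝ => (4 / b ^ 2) * (x ^ (s + 2) * Real.exp (-a * x)))
      (Set.Ioi 0) := by
    apply Integrable.const_mul
    have := integrableOn_rpow_mul_exp_neg_mul_rpow (p := 1) (s := s + 2) (b := a)
      (by linarith) one_pos ha
    exact this.congr_fun (fun x hx => by simp only [Real.rpow_one]) measurableSet_Ioi
  refine hint.mono' hmeas ?_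
  filter_upwards [ae_restrict_mem measurableSet_Ioi] with x hx
  simp only [Set.mem_Ioi] at hx
  have hxpos : (0:ℝ) < x := hx
  have h1 : Real.exp (-(b / x)) ≤ (2 * x / b) ^ 2 := by
    have hu : 0 < b / (2 * x) := by positivity
    have : b / (2 * x) ≤ Real.exp (b / (2 * x)) := by
      linarith [Real.add_one_le_exp (b / (2 * x))]
    have h2 : Real.exp (-(b / (2*x))) ≤ 2 * x / b := by
      rw [Real.exp_neg]
      rw [inv_le_comm₀ (Real.exp_pos _) (by positivity)] at *
      calc (2 * x / b)⁻¹ = b / (2 * x) := by field_simp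
        _ ≤ Real.exp (b / (2 * x)) := this
    calc Real.exp (-(b / x)) = Real.exp (-(b/(2*x))) ^ 2 := by
          rw [← Real.exp_nat_mul]; congr 1; push_cast; field_simp
      _ ≤ (2 * x / b) ^ 2 := by
          apply pow_le_pow_left₀ (Real.exp_pos _).le h2
  have hnorm : ‖x ^ s * Real.exp (-(a * x + b / x))‖ = x ^ s * Real.exp (-(a*x)) * Real.exp (-(b/x)) := by
    rw [Real.norm_eq_abs, abs_of_nonneg (by positivity)]
    rw [show -(a * x + b / x) = -(a*x) + -(b/x) by ring, Real.exp_add, mul_assoc]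
  rw [hnorm]
  have : x ^ s * Real.exp (-(a*x)) * Real.exp (-(b/x)) ≤ x ^ s * Real.exp (-(a*x)) * (2*x/b)^2 := by
    apply mul_le_mul_of_nonneg_left h1 (by positivity)
  refine this.trans (le_of_eq ?_)
  rw [Real.rpow_add hxpos, Real.rpow_two]
  field_simp
  ring

lemma helperA (E X c d e : ℝ) (hc : c ≠ 0) (he : e ≠ 0) (h : X * e = d * c) :
    X * (E / c) = d * (E / e) := by
  field_simp
  linear_combination E * h

lemma lemA {a b : ℝ} (ha : 0 < a) (hb : 0 < b) :
    ∫ x in Ioi (0:ℝ), Real.exp (-(a*x+b/x)) / Real.sqrt x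
      = (Real.sqrt b / Real.sqrt a) *
        ∫ x in Ioi (0:ℝ), Real.exp (-(a*x+b/x)) / (x * Real.sqrt x) := by
  have himg : (fun x : ℝ => b / (a * x)) '' Ioi 0 = Ioi 0 := by
    ext y
    constructor
    · rintro ⟨x, hx, rfl⟩
      simp only [mem_Ioi] at *
      positivity
    · intro hy
      simp only [mem_Ioi] at hy
      refine ⟨b / (a * y), mem_Ioi.mpr (by positivity), ?_⟩
      field_simp
  have hderiv : ∀ x ∈ Ioi (0:ℝ),
      HasDerivWithinAt (fun x : ℝ => b / (a * x)) (-(b / (a * x ^ 2))) (Ioi 0) x := by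
    intro x hx
    simp only [mem_Ioi] at hx
    have h1 := (hasDerivAt_inv hx.ne').const_mul (b / a)
    have e1 : (fun y : ℝ => b / a * y⁻¹) = fun y : ℝ => b / (a * y) := by
      funext y
      field_simp
    have e2 : b / a * -(x ^ 2)⁻¹ = -(b / (a * x ^ 2)) := by
      field_simp
    rw [e1, e2] at h1
    exact h1.hasDerivWithinAt
  have hinj : InjOn (fun x : ℝ => b / (a * x)) (Ioi 0) := by
    intro x hx y hy h
    simp only [mem_Ioi] at hx hy
    field_simp at h
    exact h.symm
  have key := integral_image_eq_integral_abs_deriv_smul measurableSet_Ioi hderiv hinj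
    (fun x => Real.exp (-(a*x+b/x)) / Real.sqrt x)
  rw [himg] at key
  rw [key, ← integral_const_mul]
  apply setIntegral_congr_fun measurableSet_Ioi
  intro x hx
  simp only [mem_Ioi] at hx
  have hsx : (0:ℝ) < Real.sqrt x := Real.sqrt_pos.mpr hx
  have hsa : (0:ℝ) < Real.sqrt a := Real.sqrt_pos.mpr ha
  have hsb : (0:ℝ) < Real.sqrt b := Real.sqrt_pos.mpr hb
  have hax : a * (b / (a * x)) = b / x := by field_simp
  have hbx : b / (b / (a * x)) = a * x := by
    rw [div_div_eq_mul_div, mul_comm, mul_div_assoc, div_self hb.ne', mul_one]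
  have habs : |(-(b / (a * x ^ 2)))| = b / (a * x ^ 2) := by
    rw [abs_neg, abs_of_pos (by positivity)]
  have hsq : Real.sqrt (b / (a * x)) = Real.sqrt b / (Real.sqrt a * Real.sqrt x) := by
    rw [Real.sqrt_div hb.le, Real.sqrt_mul ha.le]
  simp only [smul_eq_mul]
  rw [hax, hbx, habs, hsq, show b / x + a * x = a * x + b / x from add_comm _ _]
  set sa := Real.sqrt a with hsadef
  set sb := Real.sqrt b with hsbdef
  set sx := Real.sqrt x with hsxdef
  have ha2 : sa * sa = a := Real.mul_self_sqrt ha.le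
  have hb2 : sb * sb = b := Real.mul_self_sqrt hb.le
  have hx2 : sx * sx = x := Real.mul_self_sqrt hx.le
  apply helperA
  · positivity
  · positivity
  · field_simp
    rw [← ha2, ← hb2, ← hx2]
    ring

lemma lemB {a b : ℝ} (ha : 0 < a) (hb : 0 < b) :
    ∫ x in Ioi (0:ℝ),
        (Real.sqrt a / (2 * Real.sqrt x) + Real.sqrt b / (2 * (x * Real.sqrt x))) *
          Real.exp (-(a * x + b / x))
      = Real.sqrt π * Real.exp (-(2 * (Real.sqrt a * Real.sqrt b))) := by
  set sa := Real.sqrt a with hsadef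
  set sb := Real.sqrt b with hsbdef
  have hsa : 0 < sa := Real.sqrt_pos.mpr ha
  have hsb : 0 < sb := Real.sqrt_pos.mpr hb
  have ha2 : sa * sa = a := Real.mul_self_sqrt ha.le
  have hb2 : sb * sb = b := Real.mul_self_sqrt hb.le
  set ψ : ℝ → ℝ := fun x => sa * Real.sqrt x - sb / Real.sqrt x with hψdef
  set ψ' : ℝ → ℝ := fun x => sa / (2 * Real.sqrt x) + sb / (2 * (x * Real.sqrt x)) with hψ'def
  have hderiv : ∀ x ∈ Ioi (0:ℝ), HasDerivWithinAt ψ (ψ' x) (Ioi 0) x := by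
    intro x hx
    simp only [mem_Ioi] at hx
    have hsx : 0 < Real.sqrt x := Real.sqrt_pos.mpr hx
    have hx2 : Real.sqrt x * Real.sqrt x = x := Real.mul_self_sqrt hx.le
    have h1 : HasDerivAt (fun y : ℝ => sa * Real.sqrt y) (sa * (1 / (2 * Real.sqrt x))) x :=
      (Real.hasDerivAt_sqrt hx.ne').const_mul sa
    have h2 : HasDerivAt (fun y : ℝ => sb / Real.sqrt y)
        (sb * -(1 / (2 * Real.sqrt x) / Real.sqrt x ^ 2)) x := by
      have h := ((Real.hasDerivAt_sqrt hx.ne').inv hsx.ne').const_mul sb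
      simp only [div_eq_mul_inv]
      exact h.congr_deriv (by ring)
    have h3 := h1.sub h2
    have heq : sa * (1 / (2 * Real.sqrt x)) - sb * -(1 / (2 * Real.sqrt x) / Real.sqrt x ^ 2)
        = ψ' x := by
      simp only [hψ'def]
      rw [← hx2]
      field_simp
      rw [Real.sqrt_sq hsx.le]
      ring
    rw [heq] at h3
    exact h3.hasDerivWithinAt
  have hinj : InjOn ψ (Ioi 0) := by
    apply StrictMonoOn.injOn
    intro x hx y hy hxy
    simp only [mem_Ioi] at hx hy
    have hsx : 0 < Real.sqrt x := Real.sqrt_pos.mpr hx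
    have hsy : 0 < Real.sqrt y := Real.sqrt_pos.mpr hy
    have h1 : Real.sqrt x < Real.sqrt y := Real.sqrt_lt_sqrt hx.le hxy
    have h2 : sa * Real.sqrt x ≤ sa * Real.sqrt y := by nlinarith
    have h3 : sb / Real.sqrt y < sb / Real.sqrt x := by
      apply div_lt_div_of_pos_left hsb hsx h1
    simp only [hψdef]
    linarith
  have himg : ψ '' Ioi 0 = univ := by
    apply eq_univ_of_forall
    intro y
    set D := Real.sqrt (y ^ 2 + 4 * (sa * sb)) with hDdef
    have hD2 : D ^ 2 = y ^ 2 + 4 * (sa * sb) := Real.sq_sqrt (by positivity)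
    have hD0 : 0 ≤ D := Real.sqrt_nonneg _
    have hyD : 0 < y + D := by nlinarith
    set t := (y + D) / (2 * sa) with htdef
    have ht : 0 < t := by positivity
    refine ⟨t ^ 2, mem_Ioi.mpr (by positivity), ?_⟩
    have hst : Real.sqrt (t ^ 2) = t := Real.sqrt_sq ht.le
    have e1 : sa * t = (y + D) / 2 := by rw [htdef]; field_simp
    have e2 : sa * t - y = (D - y) / 2 := by linarith
    have e3 : (sa * t) * (sa * t - y) = ((y + D) / 2) * ((D - y) / 2) := by rw [e1]; linarith [e2]
    have e4 : sa * (sa * t ^ 2 - y * t - sb) = 0 := by linear_combination e3 + (1/4) * hD2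
    have hq : sa * t ^ 2 - y * t - sb = 0 := by
      rcases mul_eq_zero.mp e4 with h | h
      · exact absurd h hsa.ne'
      · exact h
    show sa * Real.sqrt (t ^ 2) - sb / Real.sqrt (t ^ 2) = y
    rw [hst]
    field_simp
    linear_combination hq
  have key := integral_image_eq_integral_abs_deriv_smul measurableSet_Ioi hderiv hinj
    (fun y => Real.exp (-y ^ 2))
  rw [himg, Measure.restrict_univ] at key
  have hgauss : ∫ y : ℝ, Real.exp (-y ^ 2) = Real.sqrt π := by
    have := integral_gaussian 1
    simpa using this
  rw [hgauss] at key
  have hpoint : ∀ x ∈ Ioi (0:ℝ), |ψ' x| • Real.exp (-(ψ x) ^ 2)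
      = Real.exp (2 * (sa * sb)) * (ψ' x * Real.exp (-(a * x + b / x))) := by
    intro x hx
    simp only [mem_Ioi] at hx
    have hsx : 0 < Real.sqrt x := Real.sqrt_pos.mpr hx
    have hx2 : Real.sqrt x * Real.sqrt x = x := Real.mul_self_sqrt hx.le
    have habs : |ψ' x| = ψ' x := abs_of_pos (by positivity)
    have hsq : (ψ x) ^ 2 = a * x + b / x - 2 * (sa * sb) := by
      simp only [hψdef]
      rw [← ha2, ← hb2]
      field_simp
      rw [Real.sq_sqrt hx.le]
      ring
    rw [habs, hsq, smul_eq_mul, show -(a * x + b / x - 2 * (sa * sb))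
      = 2 * (sa * sb) + -(a * x + b / x) by ring, Real.exp_add]
    ring
  rw [setIntegral_congr_fun measurableSet_Ioi hpoint, integral_const_mul] at key
  have hepos : (0:ℝ) < Real.exp (2 * (sa * sb)) := Real.exp_pos _
  have : ∫ x in Ioi (0:ℝ), ψ' x * Real.exp (-(a * x + b / x))
      = Real.sqrt π / Real.exp (2 * (sa * sb)) := by
    field_simp at key ⊢
    linarith
  rw [show Real.exp (-(2 * (sa * sb))) = (Real.exp (2 * (sa * sb)))⁻¹ by
    rw [Real.exp_neg], ← div_eq_mul_inv, ← this]

lemma integrableI {a b : ℝ} (ha : 0 < a) (hb : 0 < b) :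
    IntegrableOn (fun x : ℝ => Real.exp (-(a * x + b / x)) / (x * Real.sqrt x)) (Set.Ioi 0) := by
  apply (integrableOn_aux ha hb (s := -(3/2)) (by norm_num)).congr_fun _ measurableSet_Ioi
  intro x hx
  simp only [mem_Ioi] at hx
  dsimp only
  rw [show (-(3/2) : ℝ) = -(1 + 1/2) by norm_num, Real.rpow_neg hx.le, Real.rpow_add hx,
    Real.rpow_one, ← Real.sqrt_eq_rpow]
  ring

lemma integrableJ {a b : ℝ} (ha : 0 < a) (hb : 0 < b) :
    IntegrableOn (fun x : ℝ => Real.exp (-(a * x + b / x)) / Real.sqrt x) (Set.Ioi 0) := by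
  apply (integrableOn_aux ha hb (s := -(1/2)) (by norm_num)).congr_fun _ measurableSet_Ioi
  intro x hx
  simp only [mem_Ioi] at hx
  dsimp only
  rw [Real.rpow_neg hx.le, ← Real.sqrt_eq_rpow]
  ring

lemma lemI {a b : ℝ} (ha : 0 < a) (hb : 0 < b) :
    ∫ x in Ioi (0:ℝ), Real.exp (-(a * x + b / x)) / (x * Real.sqrt x)
      = Real.sqrt π / Real.sqrt b * Real.exp (-(2 * (Real.sqrt a * Real.sqrt b))) := by
  have hsa : 0 < Real.sqrt a := Real.sqrt_pos.mpr ha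
  have hsb : 0 < Real.sqrt b := Real.sqrt_pos.mpr hb
  set J := ∫ x in Ioi (0:ℝ), Real.exp (-(a*x+b/x)) / Real.sqrt x with hJdef
  set I := ∫ x in Ioi (0:ℝ), Real.exp (-(a*x+b/x)) / (x * Real.sqrt x) with hIdef
  have hsplit : (∫ x in Ioi (0:ℝ),
      (Real.sqrt a / (2 * Real.sqrt x) + Real.sqrt b / (2 * (x * Real.sqrt x))) *
        Real.exp (-(a * x + b / x)))
      = (Real.sqrt a / 2) * J + (Real.sqrt b / 2) * I := by
    rw [hJdef, hIdef]
    rw [← integral_const_mul, ← integral_const_mul,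
      ← integral_add ((integrableJ ha hb).const_mul _) ((integrableI ha hb).const_mul _)]
    apply setIntegral_congr_fun measurableSet_Ioi
    intro x hx
    simp only [mem_Ioi] at hx
    have hsx : 0 < Real.sqrt x := Real.sqrt_pos.mpr hx
    field_simp
  have hB := lemB ha hb
  have hA := lemA ha hb
  rw [← hJdef, ← hIdef] at hA
  rw [hsplit, hA] at hB
  have e5 : Real.sqrt a / 2 * (Real.sqrt b / Real.sqrt a * I) = Real.sqrt b / 2 * I := by
    field_simp
  rw [e5] at hB
  have h2 : Real.sqrt b * I = Real.sqrt π * Real.exp (-(2 * (Real.sqrt a * Real.sqrt b))) := by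
    linear_combination hB
  rw [div_mul_eq_mul_div, eq_div_iff hsb.ne', mul_comm I]
  linear_combination h2

end Aux

section Main
open Set

/-- Laplace transform of the inverse of an inverse Gaussian random variable: for
`λ > 0`, `μ > 0`, `ζ ≥ 0`,
`∫₀^∞ exp(−ζ/(2x)) √(λ/(2πx³)) exp(−λ(x−μ)²/(2μ²x)) dx
  = (√λ/√(ζ+λ)) exp(−(√λ/μ)(√(ζ+λ) − √λ))`. -/
theorem inverse_gaussian_laplace (lam μ ζ : ℝ) (hlam : 0 < lam) (hμ : 0 < μ) (hζ : 0 ≤ ζ) :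
    ∫ x in Set.Ioi (0:ℝ),
        Real.exp (-ζ / (2 * x)) * (Real.sqrt (lam / (2 * Real.pi * x ^ 3)) *
          Real.exp (-lam * (x - μ) ^ 2 / (2 * μ ^ 2 * x))) =
      Real.sqrt lam / Real.sqrt (ζ + lam) *
        Real.exp (-(Real.sqrt lam / μ) * (Real.sqrt (ζ + lam) - Real.sqrt lam)) := by
  have hπ := Real.pi_pos
  set a := lam / (2 * μ ^ 2) with hadef
  set b := (ζ + lam) / 2 with hbdef
  have ha : 0 < a := by rw [hadef]; positivity
  have hb : 0 < b := by rw [hbdef]; positivity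
  have hzl : (0:ℝ) < ζ + lam := by linarith
  have hpoint : ∀ x ∈ Ioi (0:ℝ),
      Real.exp (-ζ / (2 * x)) * (Real.sqrt (lam / (2 * Real.pi * x ^ 3)) *
          Real.exp (-lam * (x - μ) ^ 2 / (2 * μ ^ 2 * x)))
        = (Real.sqrt (lam / (2 * π)) * Real.exp (lam / μ)) *
            (Real.exp (-(a * x + b / x)) / (x * Real.sqrt x)) := by
    intro x hx
    simp only [mem_Ioi] at hx
    have hsx : 0 < Real.sqrt x := Real.sqrt_pos.mpr hx
    have hx3 : Real.sqrt (x ^ 3) = x * Real.sqrt x := by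
      rw [show x ^ 3 = x ^ 2 * x by ring, Real.sqrt_mul (sq_nonneg x), Real.sqrt_sq hx.le]
    have hs : Real.sqrt (lam / (2 * Real.pi * x ^ 3))
        = Real.sqrt (lam / (2 * π)) / (x * Real.sqrt x) := by
      rw [show lam / (2 * Real.pi * x ^ 3) = (lam / (2 * π)) / x ^ 3 by ring,
        Real.sqrt_div (by positivity), hx3]
    have hexpcomb : Real.exp (-ζ / (2 * x)) * Real.exp (-lam * (x - μ) ^ 2 / (2 * μ ^ 2 * x))
        = Real.exp (lam / μ) * Real.exp (-(a * x + b / x)) := by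
      rw [← Real.exp_add, ← Real.exp_add]
      congr 1
      rw [hadef, hbdef]
      field_simp
      ring
    rw [hs, show Real.exp (-ζ / (2 * x)) * (Real.sqrt (lam / (2 * π)) / (x * Real.sqrt x) *
        Real.exp (-lam * (x - μ) ^ 2 / (2 * μ ^ 2 * x)))
      = (Real.exp (-ζ / (2 * x)) * Real.exp (-lam * (x - μ) ^ 2 / (2 * μ ^ 2 * x))) *
          Real.sqrt (lam / (2 * π)) / (x * Real.sqrt x) by ring, hexpcomb]
    ring
  rw [setIntegral_congr_fun measurableSet_Ioi hpoint, integral_const_mul, lemI ha hb]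
  -- constants
  have h2ab : 2 * (Real.sqrt a * Real.sqrt b) = Real.sqrt lam * Real.sqrt (ζ + lam) / μ := by
    rw [← Real.sqrt_mul ha.le,
      show a * b = (Real.sqrt lam * Real.sqrt (ζ + lam) / (2 * μ)) ^ 2 by
        rw [hadef, hbdef, div_pow, mul_pow, Real.sq_sqrt hlam.le, Real.sq_sqrt hzl.le]
        field_simp,
      Real.sqrt_sq (by positivity)]
    field_simp
  have hll : Real.sqrt lam * Real.sqrt lam = lam := Real.mul_self_sqrt hlam.le
  have hexpeq : Real.exp (lam / μ) * Real.exp (-(2 * (Real.sqrt a * Real.sqrt b)))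
      = Real.exp (-(Real.sqrt lam / μ) * (Real.sqrt (ζ + lam) - Real.sqrt lam)) := by
    rw [← Real.exp_add]
    congr 1
    linear_combination (-1 : ℝ) * h2ab - (1 / μ) * hll
  have hcoef : Real.sqrt (lam / (2 * π)) * (Real.sqrt π / Real.sqrt b)
      = Real.sqrt lam / Real.sqrt (ζ + lam) := by
    have s2 : (0:ℝ) < Real.sqrt 2 := Real.sqrt_pos.mpr (by norm_num)
    have sπ : (0:ℝ) < Real.sqrt π := Real.sqrt_pos.mpr hπ
    have szl : (0:ℝ) < Real.sqrt (ζ + lam) := Real.sqrt_pos.mpr hzl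
    rw [Real.sqrt_div hlam.le, Real.sqrt_mul (by norm_num : (0:ℝ) ≤ 2), hbdef,
      Real.sqrt_div hzl.le]
    field_simp
  calc Real.sqrt (lam / (2 * π)) * Real.exp (lam / μ) *
        (Real.sqrt π / Real.sqrt b * Real.exp (-(2 * (Real.sqrt a * Real.sqrt b))))
      = (Real.sqrt (lam / (2 * π)) * (Real.sqrt π / Real.sqrt b)) *
          (Real.exp (lam / μ) * Real.exp (-(2 * (Real.sqrt a * Real.sqrt b)))) := by ring
    _ = _ := by rw [hexpeq, hcoef]

end Main
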